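/- Let N ≥ 4 and consider the N-qubit state ρ^{(D_2^N)} = a |D_2^N⟩⟨D_2^N| + (1−a) I_N / 2^N with 0 ≤ a ≤ 1. If a > C(N,2)(2N−5) / ( C(N,2)(2N−5) + 2^N ), then ρ^{(D_2^N)} is genuinely N-partite entangled, i.e. not 2-separable. -/

import Mathlib

open scoped BigOperators

noncomputable section

namespace Qubits

/-- The outer product `|ψ⟩⟨ψ|` of an `N`-qubit state vector, as a matrix in the
computational basis (indexed by configurations `Fin N → Fin 2`). -/
def outer {N : ℕ} (ψ : (Fin N → Fin 2) → ℂ) :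
    Matrix (Fin N → Fin 2) (Fin N → Fin 2) ℂ :=
  Matrix.vecMulVec ψ (star ψ)

/-- A pure `N`-qubit state is `k`-separable if `{1,…,N}` can be partitioned into `k`
(pairwise disjoint, nonempty) parts — the fibers of a surjection `P : Fin N → Fin k` —
such that `ψ` factorizes as a product of `k` functions, the `l`-th of which depends
only on the qubits in part `l`. -/
def kSepPure {N : ℕ} (k : ℕ) (ψ : (Fin N → Fin 2) → ℂ) : Prop :=
  ∃ P : Fin N → Fin k, Function.Surjective P ∧
    ∃ f : Fin k → ((Fin N → Fin 2) → ℂ),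
      (∀ l x y, (∀ i, P i = l → x i = y i) → f l x = f l y) ∧
      ∀ x, ψ x = ∏ l, f l x

/-- An `N`-qubit density matrix is `k`-separable if it is a convex combination of
projectors onto `k`-separable pure (unit) states, possibly separable with respect
to different partitions. -/
def kSep {N : ℕ} (k : ℕ) (ρ : Matrix (Fin N → Fin 2) (Fin N → Fin 2) ℂ) : Prop :=
  ∃ (n : ℕ) (p : Fin n → ℝ) (ψ : Fin n → (Fin N → Fin 2) → ℂ),
    (∀ s, 0 ≤ p s) ∧ (∑ s, p s = 1) ∧
    (∀ s, ∑ x, Complex.normSq (ψ s x) = 1) ∧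
    (∀ s, kSepPure k (ψ s)) ∧
    ρ = ∑ s, (p s : ℂ) • outer (ψ s)

/-- The `N`-qubit Dicke state with `m` excitations,
`|D_m^N⟩ = C(N,m)^{-1/2} Σ_{|S| = m} |e_S⟩`, as a vector of computational-basis
coefficients. -/
def dicke (N m : ℕ) : (Fin N → Fin 2) → ℂ :=
  fun x => if (Finset.univ.filter fun i => x i = 1).card = m
    then (((Real.sqrt (N.choose m))⁻¹ : ℝ) : ℂ) else 0

end Qubits


namespace DickeAux

open Qubits Finset

variable {N : ℕ}

def eS (W : Finset (Fin N)) : Fin N → Fin 2 := fun i => if i ∈ W then 1 else 0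

lemma filter_eS (W : Finset (Fin N)) :
    (Finset.univ.filter fun i => eS W i = 1) = W := by
  ext i
  by_cases h : i ∈ W <;> simp [eS, h]

def dv (N : ℕ) (x : Fin N → Fin 2) : ℝ :=
  if (Finset.univ.filter fun i => x i = 1).card = 2
    then (Real.sqrt (N.choose 2))⁻¹ else 0


lemma cnt_sum_le (hN : 4 ≤ N) (P : Fin N → Fin 2) (hsurj : Function.Surjective P)
    (u b : Fin N) (hub : u ≠ b) :
    (((univ.erase u).erase b).filter fun c => P b = P c).card
      + (((univ.erase b).erase u).filter fun c => P u = P c).card ≤ 2 * N - 6 := by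
  classical
  set k : Fin 2 → ℕ := fun σ => (univ.filter fun c => P c = σ).card with hk
  have hftwo : ∀ z : Fin 2, z = 0 ∨ z = 1 := by decide
  have hksum : k 0 + k 1 = N := by
    have h := Finset.card_filter_add_card_filter_not (s := (univ : Finset (Fin N)))
        (p := fun c => P c = 0)
    have h2 : (univ.filter fun c => ¬ P c = 0) = (univ.filter fun c => P c = 1) := by
      apply Finset.filter_congr; intro c _
      exact (by decide : ∀ z : Fin 2, (¬ z = 0) ↔ z = 1) (P c)
    rw [h2] at h
    simpa [hk] using h
  have hk1 : ∀ σ, 1 ≤ k σ := by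
    intro σ; obtain ⟨c, hc⟩ := hsurj σ
    exact Finset.card_pos.mpr ⟨c, by simp [hk, hc]⟩
  have hkle : ∀ σ, k σ ≤ N - 1 := by
    intro σ
    rcases hftwo σ with h | h <;> subst h
    · have := hk1 1; omega
    · have := hk1 0; omega
  have hsub : ∀ u' b' : Fin N, u' ≠ b' →
      (((univ.erase u').erase b').filter fun c => P b' = P c).card ≤ k (P b') - 1 := by
    intro u' b' hub'
    have hss : (((univ.erase u').erase b').filter fun c => P b' = P c)
        ⊆ (univ.filter fun c => P c = P b').erase b' := by
      intro c hc
      simp only [Finset.mem_filter, Finset.mem_erase, Finset.mem_univ, true_and,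
        and_true] at hc ⊢
      exact ⟨hc.1.1, hc.2.symm⟩
    have hcard := Finset.card_le_card hss
    rw [Finset.card_erase_of_mem (by simp)] at hcard
    exact hcard
  have hsub2 : ∀ u' b' : Fin N, u' ≠ b' → P u' = P b' →
      (((univ.erase u').erase b').filter fun c => P b' = P c).card ≤ k (P b') - 2 := by
    intro u' b' hub' hP
    have hss : (((univ.erase u').erase b').filter fun c => P b' = P c)
        ⊆ ((univ.filter fun c => P c = P b').erase b').erase u' := by
      intro c hc
      simp only [Finset.mem_filter, Finset.mem_erase, Finset.mem_univ, true_and,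
        and_true] at hc ⊢
      exact ⟨hc.1.2, hc.1.1, hc.2.symm⟩
    have hcard := Finset.card_le_card hss
    rw [Finset.card_erase_of_mem (by simp [hub', hP]),
        Finset.card_erase_of_mem (by simp)] at hcard
    have hkk : (univ.filter fun c => P c = P b').card = k (P b') := rfl
    omega
  by_cases hPub : P u = P b
  · have c1 := hsub2 u b hub hPub
    have c2 := hsub2 b u hub.symm hPub.symm
    have hkk : k (P u) = k (P b) := by rw [hPub]
    have h5 := hkle (P b)
    omega
  · have c1 := hsub u b hub
    have c2 := hsub b u hub.symm
    have hk2 : k (P u) + k (P b) = N := by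
      rcases hftwo (P u) with hu | hu <;> rcases hftwo (P b) with hb | hb
      · exact absurd (hu.trans hb.symm) hPub
      · rw [hu, hb]; omega
      · rw [hu, hb]; omega
      · exact absurd (hu.trans hb.symm) hPub
    have g1 := hk1 (P u)
    have g2 := hk1 (P b)
    omega

lemma nested_pair_sum (F : Fin N → Fin N → ℝ) :
    ∑ u : Fin N, ∑ b ∈ univ.erase u, F u b
      = ∑ q ∈ (univ ×ˢ univ).filter (fun q : Fin N × Fin N => q.1 ≠ q.2), F q.1 q.2 := by
  rw [Finset.sum_filter, Finset.sum_product]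
  apply Finset.sum_congr rfl
  intro u _
  rw [← Finset.filter_ne' univ u, Finset.sum_filter]
  apply Finset.sum_congr rfl
  intro b _
  by_cases h : b = u
  · simp [h]
  · simp [(show u ≠ b from fun hh => h hh.symm)]
    exact fun hh => absurd hh h

lemma count_bound (hN : 4 ≤ N) (P : Fin N → Fin 2) (hsurj : Function.Surjective P)
    (g : Fin N → Fin N → ℝ) (hg0 : ∀ u b, 0 ≤ g u b) (hgs : ∀ u b, g u b = g b u) :
    ∑ u : Fin N, ∑ b ∈ univ.erase u, ∑ c ∈ (univ.erase u).erase b,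
        (if P b = P c then (g u b + g u c) / 2 else 0)
      ≤ ((N : ℝ) - 3) * ∑ u : Fin N, ∑ b ∈ univ.erase u, g u b := by
  classical
  set cnt : Fin N → Fin N → ℕ :=
    fun u b => (((univ.erase u).erase b).filter fun c => P b = P c).card with hcnt
  have hstep1 : ∀ u b : Fin N,
      ∑ c ∈ (univ.erase u).erase b, (if P b = P c then (g u b + g u c) / 2 else 0)
        = (cnt u b : ℝ) * g u b / 2
          + (∑ c ∈ ((univ.erase u).erase b).filter (fun c => P b = P c), g u c) / 2 := by
    intro u b
    calc ∑ c ∈ (univ.erase u).erase b, (if P b = P c then (g u b + g u c) / 2 else 0)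
        = ∑ c ∈ ((univ.erase u).erase b).filter (fun c => P b = P c), (g u b + g u c) / 2 :=
          (Finset.sum_filter _ _).symm
      _ = ∑ c ∈ ((univ.erase u).erase b).filter (fun c => P b = P c), (g u b / 2 + g u c / 2) := by
          apply Finset.sum_congr rfl; intros; ring
      _ = (∑ _c ∈ ((univ.erase u).erase b).filter (fun c => P b = P c), g u b / 2)
          + (∑ c ∈ ((univ.erase u).erase b).filter (fun c => P b = P c), g u c / 2) :=
          Finset.sum_add_distrib
      _ = (cnt u b : ℝ) * g u b / 2
          + (∑ c ∈ ((univ.erase u).erase b).filter (fun c => P b = P c), g u c) / 2 := by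
          rw [Finset.sum_const, nsmul_eq_mul, ← Finset.sum_div]
          ring
  have hB : ∀ u : Fin N,
      ∑ b ∈ univ.erase u, ∑ c ∈ ((univ.erase u).erase b).filter (fun c => P b = P c), g u c
        = ∑ b ∈ univ.erase u, (cnt u b : ℝ) * g u b := by
    intro u
    have hconv : ∀ G : Fin N → Fin N → ℝ,
        ∑ q ∈ ((univ.erase u) ×ˢ (univ.erase u)).filter
            (fun q : Fin N × Fin N => q.1 ≠ q.2 ∧ P q.1 = P q.2), G q.1 q.2
          = ∑ b ∈ univ.erase u,
              ∑ c ∈ ((univ.erase u).erase b).filter (fun c => P b = P c), G b c := by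
      intro G
      rw [Finset.sum_filter, Finset.sum_product]
      apply Finset.sum_congr rfl
      intro b _
      rw [Finset.sum_filter, ← Finset.filter_ne' (univ.erase u) b, Finset.sum_filter]
      apply Finset.sum_congr rfl
      intro c _
      by_cases h1 : b = c
      · simp [h1]
      · by_cases h2 : P b = P c <;>
          simp [h1, h2, (show c ≠ b from fun hh => h1 hh.symm)]
    have hswap :
        ∑ q ∈ ((univ.erase u) ×ˢ (univ.erase u)).filter
            (fun q : Fin N × Fin N => q.1 ≠ q.2 ∧ P q.1 = P q.2), g u q.2
          = ∑ q ∈ ((univ.erase u) ×ˢ (univ.erase u)).filter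
              (fun q : Fin N × Fin N => q.1 ≠ q.2 ∧ P q.1 = P q.2), g u q.1 := by
      apply Finset.sum_nbij' (fun q => Prod.swap q) (fun q => Prod.swap q)
      · intro q hq
        simp only [Finset.mem_filter, Finset.mem_product] at hq ⊢
        exact ⟨⟨hq.1.2, hq.1.1⟩, ⟨fun hh => hq.2.1 hh.symm, hq.2.2.symm⟩⟩
      · intro q hq
        simp only [Finset.mem_filter, Finset.mem_product] at hq ⊢
        exact ⟨⟨hq.1.2, hq.1.1⟩, ⟨fun hh => hq.2.1 hh.symm, hq.2.2.symm⟩⟩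
      · intro q _; rfl
      · intro q _; rfl
      · intro q _; rfl
    calc ∑ b ∈ univ.erase u, ∑ c ∈ ((univ.erase u).erase b).filter (fun c => P b = P c), g u c
        = ∑ q ∈ ((univ.erase u) ×ˢ (univ.erase u)).filter
            (fun q : Fin N × Fin N => q.1 ≠ q.2 ∧ P q.1 = P q.2), g u q.2 :=
          (hconv (fun _ c => g u c)).symm
      _ = ∑ q ∈ ((univ.erase u) ×ˢ (univ.erase u)).filter
            (fun q : Fin N × Fin N => q.1 ≠ q.2 ∧ P q.1 = P q.2), g u q.1 := hswap
      _ = ∑ b ∈ univ.erase u,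
            ∑ _c ∈ ((univ.erase u).erase b).filter (fun c => P b = P c), g u b :=
          hconv (fun b _ => g u b)
      _ = ∑ b ∈ univ.erase u, (cnt u b : ℝ) * g u b := by
          apply Finset.sum_congr rfl; intro b _
          rw [Finset.sum_const, nsmul_eq_mul]
  have hA : ∑ u : Fin N, ∑ b ∈ univ.erase u, ∑ c ∈ (univ.erase u).erase b,
        (if P b = P c then (g u b + g u c) / 2 else 0)
      = ∑ u : Fin N, ∑ b ∈ univ.erase u, (cnt u b : ℝ) * g u b := by
    apply Finset.sum_congr rfl
    intro u _
    calc ∑ b ∈ univ.erase u, ∑ c ∈ (univ.erase u).erase b,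
          (if P b = P c then (g u b + g u c) / 2 else 0)
        = ∑ b ∈ univ.erase u, ((cnt u b : ℝ) * g u b / 2
            + (∑ c ∈ ((univ.erase u).erase b).filter (fun c => P b = P c), g u c) / 2) := by
          apply Finset.sum_congr rfl; intro b _; exact hstep1 u b
      _ = (∑ b ∈ univ.erase u, (cnt u b : ℝ) * g u b) / 2
            + (∑ b ∈ univ.erase u,
                ∑ c ∈ ((univ.erase u).erase b).filter (fun c => P b = P c), g u c) / 2 := by
          rw [Finset.sum_add_distrib, Finset.sum_div, Finset.sum_div]
      _ = ∑ b ∈ univ.erase u, (cnt u b : ℝ) * g u b := by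
          rw [hB u]; ring
  rw [hA, nested_pair_sum (fun u b => (cnt u b : ℝ) * g u b), nested_pair_sum g]
  set PP : Finset (Fin N × Fin N) :=
    (univ ×ˢ univ).filter (fun q : Fin N × Fin N => q.1 ≠ q.2) with hPP
  have hswapPP : ∑ q ∈ PP, (cnt q.1 q.2 : ℝ) * g q.1 q.2
      = ∑ q ∈ PP, (cnt q.2 q.1 : ℝ) * g q.1 q.2 := by
    have h1 : ∑ q ∈ PP, (cnt q.1 q.2 : ℝ) * g q.1 q.2
        = ∑ q ∈ PP, (cnt q.2 q.1 : ℝ) * g q.2 q.1 := by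
      apply Finset.sum_nbij' (fun q => Prod.swap q) (fun q => Prod.swap q)
      · intro q hq
        simp only [hPP, Finset.mem_filter, Finset.mem_product] at hq ⊢
        exact ⟨⟨hq.1.2, hq.1.1⟩, fun hh => hq.2 hh.symm⟩
      · intro q hq
        simp only [hPP, Finset.mem_filter, Finset.mem_product] at hq ⊢
        exact ⟨⟨hq.1.2, hq.1.1⟩, fun hh => hq.2 hh.symm⟩
      · intro q _; rfl
      · intro q _; rfl
      · intro q _; rfl
    rw [h1]
    apply Finset.sum_congr rfl; intro q _
    rw [hgs q.2 q.1]
  have hper : ∀ q ∈ PP, ((cnt q.1 q.2 : ℝ) + (cnt q.2 q.1 : ℝ)) * g q.1 q.2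
      ≤ (2 * (N : ℝ) - 6) * g q.1 q.2 := by
    intro q hq
    have hne : q.1 ≠ q.2 := by
      simp only [hPP, Finset.mem_filter, Finset.mem_product] at hq
      exact hq.2
    have hn := cnt_sum_le hN P hsurj q.1 q.2 hne
    have h6 : (6 : ℕ) ≤ 2 * N := by omega
    have hcast : ((cnt q.1 q.2 : ℝ) + (cnt q.2 q.1 : ℝ)) ≤ 2 * (N : ℝ) - 6 := by
      have h7 := (Nat.cast_le (α := ℝ)).mpr hn
      rw [Nat.cast_sub h6] at h7
      push_cast at h7
      linarith
    exact mul_le_mul_of_nonneg_right hcast (hg0 _ _)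
  have hsum2 : ∑ q ∈ PP, ((cnt q.1 q.2 : ℝ) + (cnt q.2 q.1 : ℝ)) * g q.1 q.2
      = 2 * ∑ q ∈ PP, (cnt q.1 q.2 : ℝ) * g q.1 q.2 := by
    calc ∑ q ∈ PP, ((cnt q.1 q.2 : ℝ) + (cnt q.2 q.1 : ℝ)) * g q.1 q.2
        = ∑ q ∈ PP, ((cnt q.1 q.2 : ℝ) * g q.1 q.2 + (cnt q.2 q.1 : ℝ) * g q.1 q.2) := by
          apply Finset.sum_congr rfl; intros; ring
      _ = (∑ q ∈ PP, (cnt q.1 q.2 : ℝ) * g q.1 q.2)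
            + ∑ q ∈ PP, (cnt q.2 q.1 : ℝ) * g q.1 q.2 := Finset.sum_add_distrib
      _ = 2 * ∑ q ∈ PP, (cnt q.1 q.2 : ℝ) * g q.1 q.2 := by
          rw [← hswapPP]; ring
  have hle := Finset.sum_le_sum hper
  rw [hsum2, ← Finset.mul_sum] at hle
  nlinarith [hle]




lemma factor_swap (P : Fin N → Fin 2) (f : Fin 2 → ((Fin N → Fin 2) → ℂ))
    (ψ : (Fin N → Fin 2) → ℂ)
    (hloc : ∀ l x y, (∀ i, P i = l → x i = y i) → f l x = f l y)
    (hprod : ∀ x, ψ x = ∏ l, f l x) (x y : Fin N → Fin 2) :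
    ψ x * ψ y = ψ (fun i => if P i = 0 then x i else y i)
      * ψ (fun i => if P i = 0 then y i else x i) := by
  have h10 : ∀ i : Fin N, P i = 1 → P i ≠ 0 := by
    intro i h; rw [h]; decide
  have e1 : f 0 (fun i => if P i = 0 then x i else y i) = f 0 x :=
    hloc 0 _ _ (fun i hi => if_pos hi)
  have e2 : f 1 (fun i => if P i = 0 then x i else y i) = f 1 y :=
    hloc 1 _ _ (fun i hi => if_neg (h10 i hi))
  have e3 : f 0 (fun i => if P i = 0 then y i else x i) = f 0 y :=
    hloc 0 _ _ (fun i hi => if_pos hi)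
  have e4 : f 1 (fun i => if P i = 0 then y i else x i) = f 1 x :=
    hloc 1 _ _ (fun i hi => if_neg (h10 i hi))
  rw [hprod, hprod, hprod, hprod, Fin.prod_univ_two, Fin.prod_univ_two,
    Fin.prod_univ_two, Fin.prod_univ_two, e1, e2, e3, e4]
  ring

lemma merge_eq_three (P : Fin N → Fin 2) (u b c : Fin N)
    (hub : u ≠ b) (huc : u ≠ c) (hbc : b ≠ c)
    (hb : P b = 0) (hc : P c ≠ 0) :
    (fun i => if P i = 0 then eS ({u, b} : Finset (Fin N)) i
      else eS ({u, c} : Finset (Fin N)) i) = eS ({u, b, c} : Finset (Fin N)) := by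
  funext i
  by_cases hiu : i = u
  · subst hiu; simp [eS]
  · by_cases hib : i = b
    · subst hib; simp [eS, hb]
    · by_cases hic : i = c
      · subst hic; simp [eS, hc, huc, hbc]
      · simp [eS, hiu, hib, hic]

lemma merge_eq_one (P : Fin N → Fin 2) (u b c : Fin N)
    (hub : u ≠ b) (huc : u ≠ c) (hbc : b ≠ c)
    (hb : P b = 0) (hc : P c ≠ 0) :
    (fun i => if P i = 0 then eS ({u, c} : Finset (Fin N)) i
      else eS ({u, b} : Finset (Fin N)) i) = eS ({u} : Finset (Fin N)) := by
  funext i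
  by_cases hiu : i = u
  · subst hiu; simp [eS]
  · by_cases hib : i = b
    · subst hib
      simp [eS, hb, hiu, hbc]
    · by_cases hic : i = c
      · subst hic
        simp [eS, hc, hiu, hib]
      · simp [eS, hiu, hib, hic]

lemma pure_pair_prod (P : Fin N → Fin 2) (f : Fin 2 → ((Fin N → Fin 2) → ℂ))
    (ψ : (Fin N → Fin 2) → ℂ)
    (hloc : ∀ l x y, (∀ i, P i = l → x i = y i) → f l x = f l y)
    (hprod : ∀ x, ψ x = ∏ l, f l x)
    (u b c : Fin N) (hub : u ≠ b) (huc : u ≠ c) (hbc : b ≠ c) (hP : P b ≠ P c) :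
    ψ (eS {u, b}) * ψ (eS {u, c}) = ψ (eS {u}) * ψ (eS {u, b, c}) := by
  have hftwo : ∀ z : Fin 2, z = 0 ∨ z = 1 := by decide
  rcases hftwo (P b) with hb | hb
  · have hc : P c ≠ 0 := fun hh => hP (hb.trans hh.symm)
    rw [factor_swap P f ψ hloc hprod (eS {u, b}) (eS {u, c}),
      merge_eq_three P u b c hub huc hbc hb hc,
      merge_eq_one P u b c hub huc hbc hb hc, mul_comm]
  · have hc : P c = 0 := by
      rcases hftwo (P c) with h | h
      · exact h
      · exact absurd (hb.trans h.symm) hP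
    have hb' : P b ≠ 0 := by rw [hb]; decide
    have h3 : ({u, c, b} : Finset (Fin N)) = ({u, b, c} : Finset (Fin N)) := by
      rw [Finset.pair_comm c b]
    rw [factor_swap P f ψ hloc hprod (eS {u, b}) (eS {u, c}),
      merge_eq_one P u c b huc hub (fun hh => hbc hh.symm) hc hb',
      merge_eq_three P u c b huc hub (fun hh => hbc hh.symm) hc hb', h3]

lemma pure_bound (hN : 4 ≤ N) (ψ : (Fin N → Fin 2) → ℂ) (h : kSepPure 2 ψ) :
    ∑ u : Fin N, ∑ b ∈ univ.erase u, ∑ c ∈ (univ.erase u).erase b,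
        (ψ (eS {u, b}) * star (ψ (eS {u, c}))).re
      ≤ ((N : ℝ) - 3) *
          (∑ u : Fin N, ∑ b ∈ univ.erase u, Complex.normSq (ψ (eS {u, b})))
        + ∑ u : Fin N, ∑ b ∈ univ.erase u, ∑ c ∈ (univ.erase u).erase b,
            ‖ψ (eS {u})‖ * ‖ψ (eS {u, b, c})‖ := by
  obtain ⟨P, hsurj, f, hloc, hprod⟩ := h
  have key : ∀ u b c : Fin N, b ≠ u → c ≠ u → c ≠ b →
      (ψ (eS {u, b}) * star (ψ (eS {u, c}))).re
        ≤ (if P b = P c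
            then (Complex.normSq (ψ (eS {u, b})) + Complex.normSq (ψ (eS {u, c}))) / 2 else 0)
          + ‖ψ (eS {u})‖ * ‖ψ (eS {u, b, c})‖ := by
    intro u b c hbu hcu hcb
    have habs : (ψ (eS {u, b}) * star (ψ (eS {u, c}))).re
        ≤ ‖ψ (eS {u, b})‖ * ‖ψ (eS {u, c})‖ := by
      calc (ψ (eS {u, b}) * star (ψ (eS {u, c}))).re
          ≤ ‖ψ (eS {u, b}) * star (ψ (eS {u, c}))‖ := Complex.re_le_norm _
        _ = ‖ψ (eS {u, b})‖ * ‖ψ (eS {u, c})‖ := by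
            rw [norm_mul]
            congr 1
            rw [congrFun Complex.star_def (ψ (eS {u, c})), Complex.norm_conj]
    by_cases hP : P b = P c
    · rw [if_pos hP]
      have hamgm : ‖ψ (eS {u, b})‖ * ‖ψ (eS {u, c})‖
          ≤ (Complex.normSq (ψ (eS {u, b})) + Complex.normSq (ψ (eS {u, c}))) / 2 := by
        rw [← Complex.sq_norm, ← Complex.sq_norm]
        nlinarith [sq_nonneg (‖ψ (eS {u, b})‖ - ‖ψ (eS {u, c})‖)]
      have hZ : 0 ≤ ‖ψ (eS {u})‖ * ‖ψ (eS {u, b, c})‖ :=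
        mul_nonneg (norm_nonneg _) (norm_nonneg _)
      linarith
    · rw [if_neg hP, zero_add]
      have heq : ‖ψ (eS {u, b})‖ * ‖ψ (eS {u, c})‖
          = ‖ψ (eS {u})‖ * ‖ψ (eS {u, b, c})‖ := by
        have hprod2 := pure_pair_prod P f ψ hloc hprod u b c
          (fun hh => hbu hh.symm) (fun hh => hcu hh.symm) (fun hh => hcb hh.symm) hP
        have h4 := congrArg (‖·‖) hprod2
        simpa [norm_mul] using h4
      exact habs.trans_eq heq
  have hsum1 : ∑ u : Fin N, ∑ b ∈ univ.erase u, ∑ c ∈ (univ.erase u).erase b,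
        (ψ (eS {u, b}) * star (ψ (eS {u, c}))).re
      ≤ ∑ u : Fin N, ∑ b ∈ univ.erase u, ∑ c ∈ (univ.erase u).erase b,
          ((if P b = P c
            then (Complex.normSq (ψ (eS {u, b})) + Complex.normSq (ψ (eS {u, c}))) / 2 else 0)
          + ‖ψ (eS {u})‖ * ‖ψ (eS {u, b, c})‖) := by
    apply Finset.sum_le_sum; intro u _
    apply Finset.sum_le_sum; intro b hb
    apply Finset.sum_le_sum; intro c hc
    have hbu : b ≠ u := (Finset.mem_erase.mp hb).1
    have hcb : c ≠ b := (Finset.mem_erase.mp hc).1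
    have hcu : c ≠ u := (Finset.mem_erase.mp (Finset.mem_erase.mp hc).2).1
    exact key u b c hbu hcu hcb
  have hsplit : ∑ u : Fin N, ∑ b ∈ univ.erase u, ∑ c ∈ (univ.erase u).erase b,
        ((if P b = P c
          then (Complex.normSq (ψ (eS {u, b})) + Complex.normSq (ψ (eS {u, c}))) / 2 else 0)
        + ‖ψ (eS {u})‖ * ‖ψ (eS {u, b, c})‖)
      = (∑ u : Fin N, ∑ b ∈ univ.erase u, ∑ c ∈ (univ.erase u).erase b,
          (if P b = P c
            then (Complex.normSq (ψ (eS {u, b})) + Complex.normSq (ψ (eS {u, c}))) / 2 else 0))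
        + ∑ u : Fin N, ∑ b ∈ univ.erase u, ∑ c ∈ (univ.erase u).erase b,
            ‖ψ (eS {u})‖ * ‖ψ (eS {u, b, c})‖ := by
    simp only [Finset.sum_add_distrib]
  have hcount := count_bound hN P hsurj (fun u b => Complex.normSq (ψ (eS {u, b})))
    (fun u b => Complex.normSq_nonneg _)
    (fun u b => by rw [Finset.pair_comm u b])
  calc ∑ u : Fin N, ∑ b ∈ univ.erase u, ∑ c ∈ (univ.erase u).erase b,
        (ψ (eS {u, b}) * star (ψ (eS {u, c}))).re
      ≤ _ := hsum1
    _ = _ := hsplit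
    _ ≤ ((N : ℝ) - 3) *
          (∑ u : Fin N, ∑ b ∈ univ.erase u, Complex.normSq (ψ (eS {u, b})))
        + ∑ u : Fin N, ∑ b ∈ univ.erase u, ∑ c ∈ (univ.erase u).erase b,
            ‖ψ (eS {u})‖ * ‖ψ (eS {u, b, c})‖ := by
        exact add_le_add_left hcount _


lemma dicke_eq_dv (x : Fin N → Fin 2) : dicke N 2 x = ((dv N x : ℝ) : ℂ) := by
  unfold dicke dv
  split <;> simp

lemma dv_eS (W : Finset (Fin N)) :
    dv N (eS W) = if W.card = 2 then (Real.sqrt (N.choose 2))⁻¹ else 0 := by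
  unfold dv
  rw [filter_eS]

lemma card_triple (u b c : Fin N) (hub : u ≠ b) (huc : u ≠ c) (hbc : b ≠ c) :
    ({u, b, c} : Finset (Fin N)).card = 3 := by
  rw [Finset.card_insert_of_notMem (by simp [hub, huc]),
      Finset.card_insert_of_notMem (by simp [hbc])]
  simp

lemma eS_pair_ne (u b c : Fin N) (hbu : b ≠ u) (hbc : b ≠ c) :
    eS ({u, b} : Finset (Fin N)) ≠ eS ({u, c} : Finset (Fin N)) := by
  intro h
  have h1 : eS ({u, b} : Finset (Fin N)) b = 1 := by simp [eS]
  have h2 : eS ({u, c} : Finset (Fin N)) b = 0 := by simp [eS, hbu, hbc]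
  rw [h, h2] at h1
  exact absurd h1 (by decide)

lemma cs_mix {n : ℕ} (p : Fin n → ℝ) (hp : ∀ s, 0 ≤ p s) (α β : Fin n → ℝ)
    (hα : ∀ s, 0 ≤ α s) (hβ : ∀ s, 0 ≤ β s) :
    ∑ s, p s * (α s * β s)
      ≤ Real.sqrt (∑ s, p s * α s ^ 2) * Real.sqrt (∑ s, p s * β s ^ 2) := by
  have h1 : ∑ s, p s * (α s * β s)
      = ∑ s, (Real.sqrt (p s) * α s) * (Real.sqrt (p s) * β s) := by
    apply Finset.sum_congr rfl; intro s _
    have hps : Real.sqrt (p s) * Real.sqrt (p s) = p s := Real.mul_self_sqrt (hp s)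
    calc p s * (α s * β s) = (Real.sqrt (p s) * Real.sqrt (p s)) * (α s * β s) := by rw [hps]
      _ = (Real.sqrt (p s) * α s) * (Real.sqrt (p s) * β s) := by ring
  have e1 : ∑ s, (Real.sqrt (p s) * α s) ^ 2 = ∑ s, p s * α s ^ 2 :=
    Finset.sum_congr rfl (fun s _ => by rw [mul_pow, Real.sq_sqrt (hp s)])
  have e2 : ∑ s, (Real.sqrt (p s) * β s) ^ 2 = ∑ s, p s * β s ^ 2 :=
    Finset.sum_congr rfl (fun s _ => by rw [mul_pow, Real.sq_sqrt (hp s)])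
  have h4 : (∑ s, p s * (α s * β s)) ^ 2
      ≤ (∑ s, p s * α s ^ 2) * (∑ s, p s * β s ^ 2) := by
    rw [h1, ← e1, ← e2]
    exact Finset.sum_mul_sq_le_sq_mul_sq univ _ _
  have h5 : 0 ≤ ∑ s, p s * (α s * β s) :=
    Finset.sum_nonneg (fun s _ => mul_nonneg (hp s) (mul_nonneg (hα s) (hβ s)))
  have h6 : 0 ≤ ∑ s, p s * α s ^ 2 :=
    Finset.sum_nonneg (fun s _ => mul_nonneg (hp s) (sq_nonneg _))
  calc ∑ s, p s * (α s * β s)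
      = Real.sqrt ((∑ s, p s * (α s * β s)) ^ 2) := (Real.sqrt_sq h5).symm
    _ ≤ Real.sqrt ((∑ s, p s * α s ^ 2) * (∑ s, p s * β s ^ 2)) := Real.sqrt_le_sqrt h4
    _ = Real.sqrt (∑ s, p s * α s ^ 2) * Real.sqrt (∑ s, p s * β s ^ 2) :=
        Real.sqrt_mul h6 _

lemma swap3 {n : ℕ} (F : Fin N → Fin N → Fin n → ℝ) :
    ∑ u : Fin N, ∑ b ∈ univ.erase u, ∑ s : Fin n, F u b s
      = ∑ s : Fin n, ∑ u : Fin N, ∑ b ∈ univ.erase u, F u b s := by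
  calc ∑ u : Fin N, ∑ b ∈ univ.erase u, ∑ s : Fin n, F u b s
      = ∑ u : Fin N, ∑ s : Fin n, ∑ b ∈ univ.erase u, F u b s :=
        Finset.sum_congr rfl (fun u _ => Finset.sum_comm)
    _ = ∑ s : Fin n, ∑ u : Fin N, ∑ b ∈ univ.erase u, F u b s := Finset.sum_comm

lemma swap4 {n : ℕ} (F : Fin N → Fin N → Fin N → Fin n → ℝ) :
    ∑ u : Fin N, ∑ b ∈ univ.erase u, ∑ c ∈ (univ.erase u).erase b, ∑ s : Fin n, F u b c s
      = ∑ s : Fin n, ∑ u : Fin N, ∑ b ∈ univ.erase u, ∑ c ∈ (univ.erase u).erase b, F u b c s := by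
  calc ∑ u : Fin N, ∑ b ∈ univ.erase u, ∑ c ∈ (univ.erase u).erase b, ∑ s : Fin n, F u b c s
      = ∑ u : Fin N, ∑ b ∈ univ.erase u, ∑ s : Fin n, ∑ c ∈ (univ.erase u).erase b, F u b c s :=
        Finset.sum_congr rfl (fun u _ => Finset.sum_congr rfl (fun b _ => Finset.sum_comm))
    _ = ∑ u : Fin N, ∑ s : Fin n, ∑ b ∈ univ.erase u, ∑ c ∈ (univ.erase u).erase b, F u b c s :=
        Finset.sum_congr rfl (fun u _ => Finset.sum_comm)
    _ = ∑ s : Fin n, ∑ u : Fin N, ∑ b ∈ univ.erase u, ∑ c ∈ (univ.erase u).erase b, F u b c s :=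
        Finset.sum_comm

lemma card_S2 (u : Fin N) : ((univ.erase u).card : ℝ) = (N : ℝ) - 1 := by
  rw [Finset.card_erase_of_mem (Finset.mem_univ u), Finset.card_univ, Fintype.card_fin]
  have h1 : 1 ≤ N := Fin.pos u
  rw [Nat.cast_sub h1]
  norm_num

lemma card_S3 (u b : Fin N) (h : b ≠ u) (hN : 2 ≤ N) :
    (((univ.erase u).erase b).card : ℝ) = (N : ℝ) - 2 := by
  rw [Finset.card_erase_of_mem (Finset.mem_erase.mpr ⟨h, Finset.mem_univ b⟩),
    Finset.card_erase_of_mem (Finset.mem_univ u), Finset.card_univ, Fintype.card_fin]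
  have h2 : N - 1 - 1 = N - 2 := by omega
  rw [h2, Nat.cast_sub hN]
  norm_num

lemma sum_pair_const (K : ℝ) :
    ∑ u : Fin N, ∑ _b ∈ univ.erase u, K = (N : ℝ) * ((N : ℝ) - 1) * K := by
  have h1 : ∀ u : Fin N, ∑ _b ∈ univ.erase u, K = ((N : ℝ) - 1) * K := by
    intro u
    rw [Finset.sum_const, nsmul_eq_mul, card_S2 u]
  rw [Finset.sum_congr rfl (fun u _ => h1 u), Finset.sum_const, nsmul_eq_mul,
    Finset.card_univ, Fintype.card_fin]
  ring

lemma sum_triple_const (hN : 2 ≤ N) (K : ℝ) :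
    ∑ u : Fin N, ∑ b ∈ univ.erase u, ∑ _c ∈ (univ.erase u).erase b, K
      = (N : ℝ) * ((N : ℝ) - 1) * (((N : ℝ) - 2) * K) := by
  have h1 : ∀ u : Fin N, ∀ b ∈ univ.erase u,
      ∑ _c ∈ (univ.erase u).erase b, K = ((N : ℝ) - 2) * K := by
    intro u b hb
    rw [Finset.sum_const, nsmul_eq_mul, card_S3 u b (Finset.mem_erase.mp hb).1 hN]
  have h2 : ∀ u : Fin N, ∑ b ∈ univ.erase u, ∑ _c ∈ (univ.erase u).erase b, K
      = ((N : ℝ) - 1) * (((N : ℝ) - 2) * K) := by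
    intro u
    rw [Finset.sum_congr rfl (h1 u), Finset.sum_const, nsmul_eq_mul, card_S2 u]
  rw [Finset.sum_congr rfl (fun u _ => h2 u), Finset.sum_const, nsmul_eq_mul,
    Finset.card_univ, Fintype.card_fin]
  ring

end DickeAux

set_option maxHeartbeats 1000000

open DickeAux Finset

open Qubits in
/-- If `a > C(N,2)(2N−5) / (C(N,2)(2N−5) + 2^N)` then the mixture of the `N`-qubit
Dicke state `|D_2^N⟩` with white noise is genuinely `N`-partite entangled,
i.e. not 2-separable. -/
theorem dicke2_noise_genuinely_entangled
    (N : ℕ) (hN : 4 ≤ N)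
    (a : ℝ) (ha0 : 0 ≤ a) (ha1 : a ≤ 1)
    (ha : a > (N.choose 2 : ℝ) * (2 * (N : ℝ) - 5) /
        ((N.choose 2 : ℝ) * (2 * (N : ℝ) - 5) + 2 ^ N)) :
    ¬ kSep 2 ((a : ℂ) • outer (dicke N 2) +
        (((1 - a) / 2 ^ N : ℝ) : ℂ) • (1 : Matrix (Fin N → Fin 2) (Fin N → Fin 2) ℂ)) := by
  intro hks
  obtain ⟨n, p, ψ, hp, hpsum, hnorm, hsep, hρ⟩ := hks
  classical
  set C : ℝ := (N.choose 2 : ℝ) with hCdef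
  have hC6 : (6 : ℕ) ≤ N.choose 2 := by
    calc (6 : ℕ) = Nat.choose 4 2 := by decide
      _ ≤ N.choose 2 := Nat.choose_le_choose 2 hN
  have hCpos : 0 < C := by
    rw [hCdef]
    exact_mod_cast lt_of_lt_of_le (by norm_num) hC6
  have hC2 : 2 * C + (N : ℝ) = (N : ℝ) * (N : ℝ) := by
    have h1 : 2 * N.choose 2 + N = N * N := by
      have h2 : 2 ∣ N * (N - 1) := by
        rcases Nat.even_or_odd N with he | ho
        · exact Dvd.dvd.mul_right he.two_dvd _
        · have h3 : Even (N - 1) := by rcases ho with ⟨k, hk⟩; exact ⟨k, by omega⟩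
          exact Dvd.dvd.mul_left h3.two_dvd _
      have h3 : 2 * N.choose 2 = N * (N - 1) := by
        rw [Nat.choose_two_right, Nat.mul_div_cancel' h2]
      rw [h3]
      obtain ⟨m, rfl⟩ : ∃ m, N = m + 1 := ⟨N - 1, by omega⟩
      simp [Nat.add_sub_cancel]
      ring
    have h5 := congrArg (fun m : ℕ => (m : ℝ)) h1
    push_cast at h5
    rw [hCdef]
    linarith [h5]
  set r : ℝ := (Real.sqrt (N.choose 2))⁻¹ with hrdef
  have hrr : r * r = C⁻¹ := by
    rw [hrdef, ← mul_inv, Real.mul_self_sqrt (by exact_mod_cast Nat.zero_le _), hCdef]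
  set v : ℝ := (1 - a) / 2 ^ N with hvdef
  have hv0 : 0 ≤ v := by
    rw [hvdef]
    apply div_nonneg (by linarith)
    positivity
  have hre : ∀ z : ℂ, (z * star z).re = Complex.normSq z := by
    intro z
    rw [congrFun Complex.star_def z, Complex.mul_conj]
    exact Complex.ofReal_re _
  -- entrywise identity
  have hent : ∀ x y : Fin N → Fin 2,
      a * (dv N x * dv N y) + (if x = y then v else 0)
        = ∑ s, p s * (ψ s x * star (ψ s y)).re := by
    intro x y
    have h0 := congrFun (congrFun hρ x) y
    have hL : ((a : ℂ) • outer (dicke N 2) +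
        (((1 - a) / 2 ^ N : ℝ) : ℂ) • (1 : Matrix (Fin N → Fin 2) (Fin N → Fin 2) ℂ)) x y
        = ((a * (dv N x * dv N y) + (if x = y then v else 0) : ℝ) : ℂ) := by
      simp only [Matrix.add_apply, Matrix.smul_apply, outer, Matrix.vecMulVec_apply,
        Pi.star_apply, Matrix.one_apply, smul_eq_mul]
      rw [dicke_eq_dv, dicke_eq_dv, congrFun Complex.star_def ((dv N y : ℝ) : ℂ),
        Complex.conj_ofReal]
      by_cases hxy : x = y
      · rw [if_pos hxy, if_pos hxy, mul_one, hvdef]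
        push_cast
        ring
      · rw [if_neg hxy, if_neg hxy, mul_zero, add_zero]
        push_cast
        ring
    have hR : (∑ s, (p s : ℂ) • outer (ψ s)) x y
        = ∑ s, (p s : ℂ) * (ψ s x * star (ψ s y)) := by
      rw [Matrix.sum_apply]
      apply Finset.sum_congr rfl
      intro s _
      simp [outer, Matrix.smul_apply, Matrix.vecMulVec_apply, smul_eq_mul]
    rw [hL, hR] at h0
    have h1 := congrArg Complex.re h0
    rw [Complex.ofReal_re, Complex.re_sum] at h1
    rw [h1]
    apply Finset.sum_congr rfl
    intro s _
    rw [Complex.re_ofReal_mul]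
  have hdiag : ∀ x : Fin N → Fin 2,
      ∑ s, p s * Complex.normSq (ψ s x) = a * (dv N x * dv N x) + v := by
    intro x
    have h0 := hent x x
    rw [if_pos rfl] at h0
    rw [h0]
    apply Finset.sum_congr rfl
    intro s _
    rw [hre (ψ s x)]
  have hdvp : ∀ u b : Fin N, u ≠ b → dv N (eS {u, b}) = r := by
    intro u b h
    rw [dv_eS, if_pos (Finset.card_pair h), hrdef]
  have hdv1 : ∀ u : Fin N, dv N (eS ({u} : Finset (Fin N))) = 0 := by
    intro u
    rw [dv_eS]
    simp
  have hdv3 : ∀ u b c : Fin N, u ≠ b → u ≠ c → b ≠ c →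
      dv N (eS ({u, b, c} : Finset (Fin N))) = 0 := by
    intro u b c h1 h2 h3
    rw [dv_eS, card_triple u b c h1 h2 h3]
    simp
  -- the triple sum, computed two ways
  set T1 : ℝ := ∑ u : Fin N, ∑ b ∈ univ.erase u, ∑ c ∈ (univ.erase u).erase b,
      ∑ s, p s * (ψ s (eS {u, b}) * star (ψ s (eS {u, c}))).re with hT1def
  have hT1eval : T1 = (N : ℝ) * ((N : ℝ) - 1) * (((N : ℝ) - 2) * (a * C⁻¹)) := by
    have hconst : (∑ u : Fin N, ∑ b ∈ univ.erase u, ∑ c ∈ (univ.erase u).erase b,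
        ∑ s, p s * (ψ s (eS {u, b}) * star (ψ s (eS {u, c}))).re)
        = ∑ u : Fin N, ∑ b ∈ univ.erase u, ∑ _c ∈ (univ.erase u).erase b, a * C⁻¹ := by
      apply Finset.sum_congr rfl
      intro u _
      apply Finset.sum_congr rfl
      intro b hb
      apply Finset.sum_congr rfl
      intro c hc
      have hbu : b ≠ u := (Finset.mem_erase.mp hb).1
      have hcb : c ≠ b := (Finset.mem_erase.mp hc).1
      have hcu : c ≠ u := (Finset.mem_erase.mp (Finset.mem_erase.mp hc).2).1
      rw [← hent (eS {u, b}) (eS {u, c}),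
        if_neg (eS_pair_ne u b c hbu (fun hh => hcb hh.symm)),
        hdvp u b (fun hh => hbu hh.symm), hdvp u c (fun hh => hcu hh.symm), hrr]
      ring
    rw [hT1def, hconst]
    exact sum_triple_const (by omega) _
  -- mixture bound
  have hXbound : ∀ s,
      (∑ u : Fin N, ∑ b ∈ univ.erase u, ∑ c ∈ (univ.erase u).erase b,
        (ψ s (eS {u, b}) * star (ψ s (eS {u, c}))).re)
      ≤ ((N : ℝ) - 3) *
          (∑ u : Fin N, ∑ b ∈ univ.erase u, Complex.normSq (ψ s (eS {u, b})))
        + ∑ u : Fin N, ∑ b ∈ univ.erase u, ∑ c ∈ (univ.erase u).erase b,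
            ‖ψ s (eS {u})‖ * ‖ψ s (eS {u, b, c})‖ :=
    fun s => pure_bound hN (ψ s) (hsep s)
  have hT1swap : T1 = ∑ s, p s *
      (∑ u : Fin N, ∑ b ∈ univ.erase u, ∑ c ∈ (univ.erase u).erase b,
        (ψ s (eS {u, b}) * star (ψ s (eS {u, c}))).re) := by
    rw [hT1def, swap4]
    apply Finset.sum_congr rfl
    intro s _
    simp only [Finset.mul_sum]
  have hYmix : ∑ s, p s *
      (∑ u : Fin N, ∑ b ∈ univ.erase u, Complex.normSq (ψ s (eS {u, b})))
      = (N : ℝ) * ((N : ℝ) - 1) * (a * C⁻¹ + v) := by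
    have h1 : ∑ s, p s *
        (∑ u : Fin N, ∑ b ∈ univ.erase u, Complex.normSq (ψ s (eS {u, b})))
        = ∑ u : Fin N, ∑ b ∈ univ.erase u, ∑ s, p s * Complex.normSq (ψ s (eS {u, b})) := by
      rw [swap3]
      apply Finset.sum_congr rfl
      intro s _
      simp only [Finset.mul_sum]
    have hconst2 : (∑ u : Fin N, ∑ b ∈ univ.erase u, ∑ s, p s * Complex.normSq (ψ s (eS {u, b})))
        = ∑ u : Fin N, ∑ _b ∈ univ.erase u, (a * C⁻¹ + v) := by
      apply Finset.sum_congr rfl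
      intro u _
      apply Finset.sum_congr rfl
      intro b hb
      have hbu : b ≠ u := (Finset.mem_erase.mp hb).1
      rw [hdiag (eS {u, b}), hdvp u b (fun hh => hbu hh.symm), hrr]
    rw [h1, hconst2, sum_pair_const]
  have hZmix : ∑ s, p s *
      (∑ u : Fin N, ∑ b ∈ univ.erase u, ∑ c ∈ (univ.erase u).erase b,
        ‖ψ s (eS {u})‖ * ‖ψ s (eS {u, b, c})‖)
      ≤ (N : ℝ) * ((N : ℝ) - 1) * (((N : ℝ) - 2) * v) := by
    have h1 : ∑ s, p s *
        (∑ u : Fin N, ∑ b ∈ univ.erase u, ∑ c ∈ (univ.erase u).erase b,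
          ‖ψ s (eS {u})‖ * ‖ψ s (eS {u, b, c})‖)
        = ∑ u : Fin N, ∑ b ∈ univ.erase u, ∑ c ∈ (univ.erase u).erase b,
            ∑ s, p s * (‖ψ s (eS {u})‖ * ‖ψ s (eS {u, b, c})‖) := by
      rw [swap4]
      apply Finset.sum_congr rfl
      intro s _
      simp only [Finset.mul_sum]
    rw [h1]
    have h2 : ∀ u : Fin N, ∀ b ∈ univ.erase u, ∀ c ∈ (univ.erase u).erase b,
        ∑ s, p s * (‖ψ s (eS {u})‖ * ‖ψ s (eS {u, b, c})‖) ≤ v := by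
      intro u b hb c hc
      have hbu : b ≠ u := (Finset.mem_erase.mp hb).1
      have hcb : c ≠ b := (Finset.mem_erase.mp hc).1
      have hcu : c ≠ u := (Finset.mem_erase.mp (Finset.mem_erase.mp hc).2).1
      have hcs := cs_mix p hp (fun s => ‖ψ s (eS {u})‖)
        (fun s => ‖ψ s (eS {u, b, c})‖)
        (fun s => norm_nonneg _) (fun s => norm_nonneg _)
      have e1 : ∑ s, p s * ‖ψ s (eS ({u} : Finset (Fin N)))‖ ^ 2 = v := by
        rw [show (∑ s, p s * ‖ψ s (eS ({u} : Finset (Fin N)))‖ ^ 2)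
            = ∑ s, p s * Complex.normSq (ψ s (eS ({u} : Finset (Fin N)))) from
          Finset.sum_congr rfl (fun s _ => by rw [Complex.sq_norm])]
        rw [hdiag, hdv1 u]
        ring
      have e2 : ∑ s, p s * ‖ψ s (eS ({u, b, c} : Finset (Fin N)))‖ ^ 2 = v := by
        rw [show (∑ s, p s * ‖ψ s (eS ({u, b, c} : Finset (Fin N)))‖ ^ 2)
            = ∑ s, p s * Complex.normSq (ψ s (eS ({u, b, c} : Finset (Fin N)))) from
          Finset.sum_congr rfl (fun s _ => by rw [Complex.sq_norm])]
        rw [hdiag, hdv3 u b c (fun hh => hbu hh.symm) (fun hh => hcu hh.symm)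
          (fun hh => hcb hh.symm)]
        ring
      rw [e1, e2] at hcs
      calc ∑ s, p s * (‖ψ s (eS {u})‖ * ‖ψ s (eS {u, b, c})‖)
          ≤ Real.sqrt v * Real.sqrt v := hcs
        _ = v := Real.mul_self_sqrt hv0
    calc ∑ u : Fin N, ∑ b ∈ univ.erase u, ∑ c ∈ (univ.erase u).erase b,
          ∑ s, p s * (‖ψ s (eS {u})‖ * ‖ψ s (eS {u, b, c})‖)
        ≤ ∑ u : Fin N, ∑ b ∈ univ.erase u, ∑ _c ∈ (univ.erase u).erase b, v := by
          apply Finset.sum_le_sum; intro u _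
          apply Finset.sum_le_sum; intro b hb
          apply Finset.sum_le_sum; intro c hc
          exact h2 u b hb c hc
      _ = (N : ℝ) * ((N : ℝ) - 1) * (((N : ℝ) - 2) * v) := sum_triple_const (by omega) v
  have hT1le : T1 ≤ ((N : ℝ) - 3) * ((N : ℝ) * ((N : ℝ) - 1) * (a * C⁻¹ + v))
      + (N : ℝ) * ((N : ℝ) - 1) * (((N : ℝ) - 2) * v) := by
    rw [hT1swap]
    calc ∑ s, p s * (∑ u : Fin N, ∑ b ∈ univ.erase u, ∑ c ∈ (univ.erase u).erase b,
          (ψ s (eS {u, b}) * star (ψ s (eS {u, c}))).re)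
        ≤ ∑ s, p s * (((N : ℝ) - 3) *
            (∑ u : Fin N, ∑ b ∈ univ.erase u, Complex.normSq (ψ s (eS {u, b})))
          + ∑ u : Fin N, ∑ b ∈ univ.erase u, ∑ c ∈ (univ.erase u).erase b,
              ‖ψ s (eS {u})‖ * ‖ψ s (eS {u, b, c})‖) := by
          apply Finset.sum_le_sum
          intro s _
          exact mul_le_mul_of_nonneg_left (hXbound s) (hp s)
      _ = ((N : ℝ) - 3) * (∑ s, p s *
            (∑ u : Fin N, ∑ b ∈ univ.erase u, Complex.normSq (ψ s (eS {u, b}))))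
          + ∑ s, p s * (∑ u : Fin N, ∑ b ∈ univ.erase u, ∑ c ∈ (univ.erase u).erase b,
              ‖ψ s (eS {u})‖ * ‖ψ s (eS {u, b, c})‖) := by
          have e : ∀ s : Fin n,
              p s * (((N : ℝ) - 3) *
                  (∑ u : Fin N, ∑ b ∈ univ.erase u, Complex.normSq (ψ s (eS {u, b})))
                + ∑ u : Fin N, ∑ b ∈ univ.erase u, ∑ c ∈ (univ.erase u).erase b,
                    ‖ψ s (eS {u})‖ * ‖ψ s (eS {u, b, c})‖)
              = ((N : ℝ) - 3) * (p s *
                  (∑ u : Fin N, ∑ b ∈ univ.erase u, Complex.normSq (ψ s (eS {u, b}))))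
                + p s * (∑ u : Fin N, ∑ b ∈ univ.erase u, ∑ c ∈ (univ.erase u).erase b,
                    ‖ψ s (eS {u})‖ * ‖ψ s (eS {u, b, c})‖) := by
            intro s; ring
          rw [Finset.sum_congr rfl (fun s _ => e s), Finset.sum_add_distrib, ← Finset.mul_sum]
      _ ≤ ((N : ℝ) - 3) * ((N : ℝ) * ((N : ℝ) - 1) * (a * C⁻¹ + v))
          + (N : ℝ) * ((N : ℝ) - 1) * (((N : ℝ) - 2) * v) := by
          rw [hYmix]
          exact add_le_add_right hZmix _
  -- final arithmetic contradiction
  have hNr : (4 : ℝ) ≤ (N : ℝ) := by exact_mod_cast hN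
  have h2N : (0 : ℝ) < 2 ^ N := by positivity
  have h25 : (0 : ℝ) < 2 * (N : ℝ) - 5 := by linarith
  have hden : (0 : ℝ) < C * (2 * (N : ℝ) - 5) + 2 ^ N := by positivity
  rw [gt_iff_lt, div_lt_iff₀ hden] at ha
  have hfrac : (2 * (N : ℝ) - 5) * v < a * C⁻¹ := by
    have key2 : C * ((2 * (N : ℝ) - 5) * (1 - a)) < a * 2 ^ N := by nlinarith [ha]
    rw [hvdef]
    rw [show (2 * (N : ℝ) - 5) * ((1 - a) / 2 ^ N)
        = ((2 * (N : ℝ) - 5) * (1 - a)) / 2 ^ N from by ring]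
    rw [show a * C⁻¹ = a / C from by ring]
    rw [div_lt_div_iff₀ h2N hCpos]
    nlinarith [key2]
  have hkey3 : (N : ℝ) * ((N : ℝ) - 1) * ((a * C⁻¹) - (2 * (N : ℝ) - 5) * v) ≤ 0 := by
    rw [hT1eval] at hT1le
    nlinarith [hT1le, sq_nonneg ((N:ℝ))]
  have hn1 : (0 : ℝ) < (N : ℝ) * ((N : ℝ) - 1) := by nlinarith
  have hpos : (0 : ℝ) < (N : ℝ) * ((N : ℝ) - 1) * ((a * C⁻¹) - (2 * (N : ℝ) - 5) * v) := by
    apply mul_pos hn1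
    linarith
  linarith
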